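/- Let K be an algebraically closed field of characteristic zero, let Γ be a group, and let V be a nonzero finite-dimensional K-linear representation of Γ. Then V is one-dimensional if and only if the tensor product representation V ⊗ V is irreducible (simple). -/

import Mathlib

open CategoryTheory MonoidalCategory

section Aux
open Module

variable {K Γ : Type} [Field K] [Group Γ]

noncomputable def subrep (X : FDRep K Γ) (p : Submodule K X)
    (hp : ∀ g : Γ, ∀ x ∈ p, X.ρ g x ∈ p) : FDRep K Γ :=
  FDRep.of
  { toFun := fun g => (X.ρ g).restrict (hp g)
    map_one' := by ext x; simp [LinearMap.restrict_apply]
    map_mul' := fun g h => by ext x; simp [LinearMap.restrict_apply] }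

theorem mono_inj {X Y : FDRep K Γ} (f : Y ⟶ X) [Mono f] : Function.Injective f.hom := by
  set p : Submodule K Y := LinearMap.ker f.hom.hom.hom with hpdef
  have hinv : ∀ g : Γ, ∀ x ∈ p, Y.ρ g x ∈ p := by
    intro g x hx
    have h1 : f.hom (Y.ρ g x) = X.ρ g (f.hom x) := ConcreteCategory.congr_hom (f.comm g) x
    have hx0 : f.hom x = (0 : X) := hx
    show f.hom (Y.ρ g x) = (0 : X)
    rw [h1, hx0, map_zero]
  let ι : subrep Y p hinv ⟶ Y := ⟨ConcreteCategory.ofHom (p.subtype : _ →ₗ[K] _), fun g => rfl⟩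
  have hι : ι ≫ f = 0 := by
    apply Action.hom_ext
    apply FGModuleCat.hom_ext
    refine LinearMap.ext fun x => ?_
    exact x.2
  have h0 : ι = 0 := (cancel_mono f).mp (by simp [hι])
  have hbot : p = ⊥ := by
    rw [Submodule.eq_bot_iff]
    intro x hx
    have h2 := ConcreteCategory.congr_hom (congrArg Action.Hom.hom h0) ⟨x, hx⟩
    rw [Action.zero_hom] at h2
    exact h2
  exact LinearMap.ker_eq_bot.mp hbot

theorem simple_of_finrank_one {X : FDRep K Γ} (h : finrank K X = 1) : Simple X := by
  have hnt : Nontrivial X := by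
    apply Module.nontrivial_of_finrank_pos (R := K); omega
  constructor
  intro Y f hf
  constructor
  · intro hiso h0
    obtain ⟨x, y, hxy⟩ := hnt
    have hid : (𝟙 X : X ⟶ X) = 0 := by
      calc (𝟙 X : X ⟶ X) = inv f ≫ f := (IsIso.inv_hom_id f).symm
      _ = inv f ≫ 0 := congrArg (fun t => inv f ≫ t) h0
      _ = 0 := Limits.comp_zero
    have hx := ConcreteCategory.congr_hom (congrArg Action.Hom.hom hid) x
    have hy := ConcreteCategory.congr_hom (congrArg Action.Hom.hom hid) y
    simp only [Action.id_hom, Action.zero_hom] at hx hy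
    apply hxy
    calc x = (𝟙 X.V) x := rfl
    _ = (0 : X.V ⟶ X.V) x := hx
    _ = (𝟙 X.V) y := hy.symm
    _ = y := rfl
  · intro hf0
    have hinj : Function.Injective f.hom := mono_inj f
    have hne : f.hom.hom.hom ≠ 0 := fun hc => hf0 (Action.hom_ext _ _ (FGModuleCat.hom_ext (by simpa using hc)))
    have hrange : LinearMap.range f.hom.hom.hom = ⊤ := by
      have h1 : LinearMap.range f.hom.hom.hom ≠ ⊥ := by
        rw [ne_eq, LinearMap.range_eq_bot]; exact hne
      apply Submodule.eq_top_of_finrank_eq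
      have hle := Submodule.finrank_le (LinearMap.range f.hom.hom.hom)
      have hnt' : Nontrivial (LinearMap.range f.hom.hom.hom) :=
        Submodule.nontrivial_iff_ne_bot.mpr h1
      have hpos : 0 < finrank K (LinearMap.range f.hom.hom.hom) :=
        finrank_pos
      have hle2 : finrank K (LinearMap.range f.hom.hom.hom) ≤ 1 :=
        le_trans hle (le_of_eq h)
      exact (le_antisymm hle2 hpos).trans h.symm
    have hsurj : Function.Surjective f.hom := LinearMap.range_eq_top.mp hrange
    let e : Y ≃ₗ[K] X := LinearEquiv.ofBijective f.hom.hom.hom ⟨hinj, hsurj⟩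
    refine ⟨⟨⟨ConcreteCategory.ofHom (e.symm.toLinearMap : X →ₗ[K] Y), fun g => ?_⟩, ?_, ?_⟩⟩
    · apply FGModuleCat.hom_ext
      refine LinearMap.ext fun x => ?_
      apply hinj
      show f.hom (e.symm (X.ρ g x)) = f.hom (Y.ρ g (e.symm x))
      have h2 : f.hom (Y.ρ g (e.symm x)) = X.ρ g (f.hom (e.symm x)) :=
        ConcreteCategory.congr_hom (f.comm g) (e.symm x)
      have h3 : ∀ z : X, f.hom (e.symm z) = z := fun z => e.apply_symm_apply z
      rw [h2, h3, h3]
    · apply Action.hom_ext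
      apply FGModuleCat.hom_ext
      refine LinearMap.ext fun y => ?_
      show e.symm (f.hom y) = y
      exact e.symm_apply_apply y
    · apply Action.hom_ext
      apply FGModuleCat.hom_ext
      refine LinearMap.ext fun x => ?_
      show f.hom (e.symm x) = x
      exact e.apply_symm_apply x

/-- **Lemma (isom) (c), key observation**: Let `K` be an algebraically closed field of
characteristic zero, `Γ` a group, and `V` a nonzero finite-dimensional `K`-linear
representation of `Γ`.  Then `V` is one-dimensional if and only if the tensor product
representation `V ⊗ V` is irreducible (simple). -/
theorem stmt_9 {K Γ : Type} [Field K] [IsAlgClosed K] [CharZero K] [Group Γ]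
    (V : FDRep K Γ) (hV : Nontrivial V) :
    Module.finrank K V = 1 ↔ Simple (V ⊗ V : FDRep K Γ) := by
  constructor
  · intro h
    apply simple_of_finrank_one
    show finrank K (TensorProduct K V V) = 1
    rw [Module.finrank_tensorProduct, h, mul_one]
  · intro hS
    by_contra hne
    have h2 : 2 ≤ finrank K V := by
      have h1 : 0 < finrank K V := finrank_pos
      omega
    obtain ⟨c, hc⟩ := endomorphism_simple_eq_smul_id (𝕜 := K) ((β_ V V).hom)
    set n := finrank K V with hn
    let b := finBasis K V
    let i0 : Fin n := ⟨0, by omega⟩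
    let i1 : Fin n := ⟨1, by omega⟩
    let B := Basis.tensorProduct b b
    have he : (b i1) ⊗ₜ[K] (b i0) = c • ((b i0) ⊗ₜ[K] (b i1)) := by
      have h4 := ConcreteCategory.congr_hom (congrArg Action.Hom.hom hc) ((b i0) ⊗ₜ[K] (b i1))
      simp only [Action.smul_hom, LinearMap.smul_apply, Action.id_hom] at h4
      exact h4.symm
    have e1 : (b i1) ⊗ₜ[K] (b i0) = B (i1, i0) := (Basis.tensorProduct_apply b b i1 i0).symm
    have e2 : (b i0) ⊗ₜ[K] (b i1) = B (i0, i1) := (Basis.tensorProduct_apply b b i0 i1).symm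
    rw [e1, e2] at he
    have h5 := congrArg (fun z => B.repr z (i1, i0)) he
    have hne01 : (i0, i1) ≠ (i1, i0) := by
      intro hcon
      have : i0 = i1 := congrArg Prod.fst hcon
      simp [i0, i1, Fin.ext_iff] at this
    simp [Basis.repr_self, Finsupp.single_apply, hne01] at h5

end Aux
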